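/- arXiv:2604.00680 — 2 statements merged into one kernel-verified Lean document; each statement's English description precedes it below -/
import Mathlib

section
/- Let l ≥ 2 and q ≥ 1. Let 𝓛 ∈ ℝ^{l×l} be such that S := 𝓛 + 𝓛ᵀ is positive semidefinite and the kernel of S is exactly the span of the all-ones vector 𝟏 ∈ ℝ^l; let λ₂ > 0 be the smallest nonzero eigenvalue of S. Let N̄ ∈ ℝ^{q×q} and let P̄ ∈ ℝ^{q×q} be symmetric positive definite with N̄ᵀP̄ + P̄N̄ negative definite. Let N₁,…,N_l ∈ ℝ^{q×q} satisfy ∑_{i=1}^{l} N_i = l·N̄. Define the block-diagonal matrices N := blkdiag(N₁,…,N_l) ∈ ℝ^{lq×lq} and M := I_l ⊗ P̄^{-1} ∈ ℝ^{lq×lq}. Let Λ₁ be the largest eigenvalue of NᵀM^{-1} + M^{-1}N, let Λ₂ < 0 be the largest eigenvalue of N̄ᵀP̄ + P̄N̄, and let Λ₃ be the largest eigenvalue of (NᵀM^{-1} + M^{-1}N)². Then for every scalar γ > (Λ₁ − Λ₃/Λ₂)/λ₂, every complex eigenvalue of the matrix N − γ M (𝓛 ⊗ I_q) has negative real part. 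-/
open Matrix Kronecker

namespace Stmt13Aux

variable {n : Type*} [Fintype n] [DecidableEq n]

lemma dot_symm (C : Matrix n n ℝ) (hC : Cᵀ = C) (a b : n → ℝ) :
    a ⬝ᵥ (C *ᵥ b) = b ⬝ᵥ (C *ᵥ a) := by
  rw [dotProduct_mulVec, ← mulVec_transpose, hC, dotProduct_comm]

lemma isHermitian_of_symm (A : Matrix n n ℝ) (h : Aᵀ = A) : A.IsHermitian := by
  have : Aᴴ = Aᵀ := by ext i j; simp [conjTranspose_apply]
  unfold Matrix.IsHermitian
  rw [this, h]

lemma re_quad (R : Matrix n n ℝ) (v : n → ℂ) :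
    (star v ⬝ᵥ ((R.map Complex.ofReal) *ᵥ v)).re
      = (fun i => (v i).re) ⬝ᵥ (R *ᵥ fun i => (v i).re)
        + (fun i => (v i).im) ⬝ᵥ (R *ᵥ fun i => (v i).im) := by
  simp only [dotProduct, mulVec, Pi.star_apply, Finset.mul_sum, Complex.re_sum,
    Matrix.map_apply, ← Finset.sum_add_distrib]
  refine Finset.sum_congr rfl fun i _ => Finset.sum_congr rfl fun j _ => ?_
  simp only [Complex.star_def, Complex.mul_re, Complex.mul_im, Complex.conj_re,
    Complex.conj_im, Complex.ofReal_re, Complex.ofReal_im]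
  ring

lemma mulVec_map_star (A : Matrix n n ℝ) (v : n → ℂ) :
    (A.map Complex.ofReal) *ᵥ (star v) = star ((A.map Complex.ofReal) *ᵥ v) := by
  funext i
  simp only [mulVec, dotProduct, Pi.star_apply, Complex.star_def, map_sum, _root_.map_mul,
    Matrix.map_apply, Complex.conj_ofReal]

lemma quad_eig (A P : Matrix n n ℝ) (μ : ℂ) (v : n → ℂ)
    (hv : (A.map Complex.ofReal) *ᵥ v = μ • v) :
    star v ⬝ᵥ (((Aᵀ * P + P * A).map Complex.ofReal) *ᵥ v)
      = (μ + (starRingEnd ℂ) μ) * (star v ⬝ᵥ ((P.map Complex.ofReal) *ᵥ v)) := by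
  have hmap : (Aᵀ * P + P * A).map Complex.ofReal
      = (A.map Complex.ofReal)ᵀ * (P.map Complex.ofReal)
        + (P.map Complex.ofReal) * (A.map Complex.ofReal) := by
    ext i j
    simp [Matrix.map_apply, Matrix.mul_apply, Matrix.add_apply, Matrix.transpose_apply,
      Complex.ofReal_sum, Complex.ofReal_mul, Complex.ofReal_add]
  set Ac := A.map Complex.ofReal
  set Pc := P.map Complex.ofReal
  have h1 : star v ⬝ᵥ ((Pc * Ac) *ᵥ v) = μ * (star v ⬝ᵥ (Pc *ᵥ v)) := by
    rw [← mulVec_mulVec, hv, mulVec_smul, dotProduct_smul, smul_eq_mul]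
  have h2 : star v ⬝ᵥ ((Acᵀ * Pc) *ᵥ v)
      = (starRingEnd ℂ) μ * (star v ⬝ᵥ (Pc *ᵥ v)) := by
    rw [dotProduct_mulVec, ← vecMul_vecMul]
    have hA : star v ᵥ* Acᵀ = (starRingEnd ℂ) μ • star v := by
      rw [vecMul_transpose, mulVec_map_star, hv, star_smul]
      rfl
    rw [hA, smul_vecMul, smul_dotProduct, smul_eq_mul, ← dotProduct_mulVec]
  rw [hmap, add_mulVec, dotProduct_add, h1, h2]
  ring

lemma mem_spectrum_iff_exists' {K : Type*} [Field K] (A : Matrix n n K) (μ : K) :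
    μ ∈ spectrum K A ↔ ∃ v, v ≠ 0 ∧ A *ᵥ v = μ • v := by
  rw [spectrum.mem_iff]
  have halg : (algebraMap K (Matrix n n K)) μ = μ • (1 : Matrix n n K) :=
    Algebra.algebraMap_eq_smul_one μ
  constructor
  · intro h
    have hdet : (algebraMap K (Matrix n n K) μ - A).det = 0 := by
      by_contra hd
      exact h ((Matrix.isUnit_iff_isUnit_det _).mpr (isUnit_iff_ne_zero.mpr hd))
    obtain ⟨v, hv0, hv⟩ := (Matrix.exists_mulVec_eq_zero_iff).mpr hdet
    refine ⟨v, hv0, ?_⟩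
    rw [halg, sub_mulVec, smul_mulVec, one_mulVec, sub_eq_zero] at hv
    exact hv.symm
  · rintro ⟨v, hv0, hv⟩
    intro h
    have hdet := (Matrix.isUnit_iff_isUnit_det _).mp h
    have hz : (algebraMap K (Matrix n n K) μ - A).det = 0 := by
      apply Matrix.exists_mulVec_eq_zero_iff.mp
      refine ⟨v, hv0, ?_⟩
      rw [halg, sub_mulVec, smul_mulVec, one_mulVec, hv, sub_self]
    rw [hz] at hdet
    exact (isUnit_iff_ne_zero.mp hdet) rfl

lemma hurwitz_of_lyapunov (A P : Matrix n n ℝ) (hP : P.PosDef)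
    (hL : (-(Aᵀ * P + P * A)).PosDef) :
    ∀ μ ∈ spectrum ℂ (A.map Complex.ofReal), μ.re < 0 := by
  intro μ hμ
  obtain ⟨v, hv0, hv⟩ := (mem_spectrum_iff_exists' _ μ).mp hμ
  set a : n → ℝ := fun i => (v i).re with ha
  set b : n → ℝ := fun i => (v i).im with hb
  have hab : a ≠ 0 ∨ b ≠ 0 := by
    by_contra h
    push_neg at h
    apply hv0
    funext i
    have h1 := congrFun h.1 i
    have h2 := congrFun h.2 i
    simp only [ha, hb, Pi.zero_apply] at h1 h2
    exact Complex.ext (by simpa using h1) (by simpa using h2)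
  have hstar : ∀ w : n → ℝ, star w = w := fun w => by funext i; simp
  have hPform : ∀ w : n → ℝ, 0 ≤ w ⬝ᵥ (P *ᵥ w) := fun w => by
    have := hP.posSemidef.dotProduct_mulVec_nonneg w; rwa [hstar] at this
  have hPformpos : ∀ w : n → ℝ, w ≠ 0 → 0 < w ⬝ᵥ (P *ᵥ w) := fun w hw => by
    have := hP.dotProduct_mulVec_pos hw; rwa [hstar] at this
  have hLform : ∀ w : n → ℝ, 0 ≤ -(w ⬝ᵥ ((Aᵀ * P + P * A) *ᵥ w)) := fun w => by
    have := hL.posSemidef.dotProduct_mulVec_nonneg w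
    rwa [hstar, neg_mulVec, dotProduct_neg] at this
  have hLformpos : ∀ w : n → ℝ, w ≠ 0 → 0 < -(w ⬝ᵥ ((Aᵀ * P + P * A) *ᵥ w)) := fun w hw => by
    have := hL.dotProduct_mulVec_pos hw
    rwa [hstar, neg_mulVec, dotProduct_neg] at this
  have hPq : 0 < a ⬝ᵥ (P *ᵥ a) + b ⬝ᵥ (P *ᵥ b) := by
    rcases hab with h | h
    · have := hPformpos a h; have := hPform b; linarith
    · have := hPformpos b h; have := hPform a; linarith
  have hLq : a ⬝ᵥ ((Aᵀ * P + P * A) *ᵥ a) + b ⬝ᵥ ((Aᵀ * P + P * A) *ᵥ b) < 0 := by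
    rcases hab with h | h
    · have := hLformpos a h; have := hLform b; linarith
    · have := hLformpos b h; have := hLform a; linarith
  have key := quad_eig A P μ v hv
  have hconj : μ + (starRingEnd ℂ) μ = ((2 * μ.re : ℝ) : ℂ) := by
    rw [Complex.add_conj]; try push_cast; try ring
  rw [hconj] at key
  have hre := congrArg Complex.re key
  rw [re_quad, Complex.re_ofReal_mul, re_quad] at hre
  nlinarith [hre, hPq, hLq]



lemma mem_spectrum_iff_exists {K : Type*} [Field K] (A : Matrix n n K) (μ : K) :
    μ ∈ spectrum K A ↔ ∃ v, v ≠ 0 ∧ A *ᵥ v = μ • v := by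
  rw [spectrum.mem_iff]
  have halg : (algebraMap K (Matrix n n K)) μ = μ • (1 : Matrix n n K) :=
    Algebra.algebraMap_eq_smul_one μ
  constructor
  · intro h
    have hdet : (algebraMap K (Matrix n n K) μ - A).det = 0 := by
      by_contra hd
      exact h ((Matrix.isUnit_iff_isUnit_det _).mpr (isUnit_iff_ne_zero.mpr hd))
    obtain ⟨v, hv0, hv⟩ := (Matrix.exists_mulVec_eq_zero_iff).mpr hdet
    refine ⟨v, hv0, ?_⟩
    rw [halg, sub_mulVec, smul_mulVec, one_mulVec, sub_eq_zero] at hv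
    exact hv.symm
  · rintro ⟨v, hv0, hv⟩
    intro h
    have hdet := (Matrix.isUnit_iff_isUnit_det _).mp h
    have : (algebraMap K (Matrix n n K) μ - A).det = 0 := by
      apply Matrix.exists_mulVec_eq_zero_iff.mp
      refine ⟨v, hv0, ?_⟩
      rw [halg, sub_mulVec, smul_mulVec, one_mulVec, hv, sub_self]
    rw [this] at hdet
    exact (isUnit_iff_ne_zero.mp hdet) rfl

lemma inner_eq_dot (a b : EuclideanSpace ℝ n) :
    (@inner ℝ (EuclideanSpace ℝ n) _ a b) = ⇑a ⬝ᵥ ⇑b := by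
  simp [PiLp.inner_apply, RCLike.inner_apply, dotProduct, mul_comm]

lemma term_calc (A : Matrix n n ℝ) (hAT : Aᵀ = A) (w x : n → ℝ) (d : ℝ)
    (hw : A *ᵥ w = d • w) : (x ⬝ᵥ w) * (w ⬝ᵥ (A *ᵥ x)) = d * (w ⬝ᵥ x)^2 := by
  rw [dotProduct_mulVec, ← mulVec_transpose, hAT, hw, smul_dotProduct, dotProduct_comm x w]
  simp [smul_eq_mul]
  ring

lemma term_calc2 (w x : n → ℝ) : (x ⬝ᵥ w) * (w ⬝ᵥ x) = (w ⬝ᵥ x)^2 := by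
  rw [dotProduct_comm]; ring

lemma quad_decomp {A : Matrix n n ℝ} (hA : A.IsHermitian) :
    ∃ (d : n → ℝ) (u : n → n → ℝ),
      (∀ i, d i ∈ spectrum ℝ A) ∧
      (∀ i, A *ᵥ u i = d i • u i) ∧
      (∀ x : n → ℝ, x ⬝ᵥ (A *ᵥ x) = ∑ i, d i * (u i ⬝ᵥ x)^2) ∧
      (∀ x : n → ℝ, x ⬝ᵥ x = ∑ i, (u i ⬝ᵥ x)^2) := by
  classical
  have hAT : Aᵀ = A := by
    have := hA
    unfold Matrix.IsHermitian at this
    simpa using this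
  refine ⟨hA.eigenvalues, fun i => ⇑(hA.eigenvectorBasis i),
    fun i => hA.eigenvalues_mem_spectrum_real i,
    fun i => hA.mulVec_eigenvectorBasis i, ?_, ?_⟩
  · intro x
    have key := (hA.eigenvectorBasis).sum_inner_mul_inner
      (WithLp.toLp 2 x) (WithLp.toLp 2 (A *ᵥ x))
    simp only [inner_eq_dot, WithLp.ofLp_toLp] at key
    rw [← key]
    refine Finset.sum_congr rfl fun i _ => ?_
    exact term_calc A hAT _ x _ (hA.mulVec_eigenvectorBasis i)
  · intro x
    have key := (hA.eigenvectorBasis).sum_inner_mul_inner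
      (WithLp.toLp 2 x) (WithLp.toLp 2 x)
    simp only [inner_eq_dot, WithLp.ofLp_toLp] at key
    rw [← key]
    refine Finset.sum_congr rfl fun i _ => ?_
    exact term_calc2 _ x

lemma rayleigh_upper {A : Matrix n n ℝ} (hA : A.IsHermitian) {Λ : ℝ}
    (h : ∀ μ ∈ spectrum ℝ A, μ ≤ Λ) (x : n → ℝ) :
    x ⬝ᵥ (A *ᵥ x) ≤ Λ * (x ⬝ᵥ x) := by
  obtain ⟨d, u, hspec, -, hform, hnorm⟩ := quad_decomp hA
  rw [hform, hnorm, Finset.mul_sum]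
  exact Finset.sum_le_sum fun i _ => mul_le_mul_of_nonneg_right (h _ (hspec i)) (sq_nonneg _)

lemma exists_min_eig [Nonempty n] {A : Matrix n n ℝ} (hA : A.IsHermitian) :
    ∃ μ ∈ spectrum ℝ A, ∀ x : n → ℝ, μ * (x ⬝ᵥ x) ≤ x ⬝ᵥ (A *ᵥ x) := by
  obtain ⟨d, u, hspec, -, hform, hnorm⟩ := quad_decomp hA
  obtain ⟨i0, -, hi0⟩ := Finset.exists_min_image Finset.univ d
    ⟨Classical.arbitrary n, Finset.mem_univ _⟩
  refine ⟨d i0, hspec i0, fun x => ?_⟩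
  rw [hform, hnorm, Finset.mul_sum]
  exact Finset.sum_le_sum fun i _ => mul_le_mul_of_nonneg_right (hi0 i (Finset.mem_univ i))
    (sq_nonneg _)

lemma exists_max_eig [Nonempty n] {A : Matrix n n ℝ} (hA : A.IsHermitian) :
    ∃ μ ∈ spectrum ℝ A, ∀ x : n → ℝ, x ⬝ᵥ (A *ᵥ x) ≤ μ * (x ⬝ᵥ x) := by
  obtain ⟨d, u, hspec, -, hform, hnorm⟩ := quad_decomp hA
  obtain ⟨i0, -, hi0⟩ := Finset.exists_max_image Finset.univ d
    ⟨Classical.arbitrary n, Finset.mem_univ _⟩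
  refine ⟨d i0, hspec i0, fun x => ?_⟩
  rw [hform, hnorm, Finset.mul_sum]
  exact Finset.sum_le_sum fun i _ => mul_le_mul_of_nonneg_right (hi0 i (Finset.mem_univ i))
    (sq_nonneg _)

lemma spectrum_psd_nonneg {A : Matrix n n ℝ} (hA : A.PosSemidef) {μ : ℝ}
    (hμ : μ ∈ spectrum ℝ A) : 0 ≤ μ := by
  obtain ⟨v, hv0, hv⟩ := (mem_spectrum_iff_exists A μ).mp hμ
  have h1 : (0:ℝ) ≤ star v ⬝ᵥ (A *ᵥ v) := hA.dotProduct_mulVec_nonneg v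
  have hsv : star v = v := by funext i; simp
  rw [hsv, hv, dotProduct_smul, smul_eq_mul] at h1
  have hnn : 0 ≤ v ⬝ᵥ v := Finset.sum_nonneg fun i _ => mul_self_nonneg _
  have hne : v ⬝ᵥ v ≠ 0 := fun h => hv0 ((dotProduct_self_eq_zero).mp h)
  nlinarith [lt_of_le_of_ne hnn (Ne.symm hne)]


lemma star_id {m : Type*} (w : m → ℝ) : star w = w := funext fun i => by simp

lemma dot_self_nonneg {m : Type*} [Fintype m] (w : m → ℝ) : 0 ≤ w ⬝ᵥ w :=
  Finset.sum_nonneg fun i _ => mul_self_nonneg _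

lemma vecMul_eq_mulVec (C : Matrix n n ℝ) (hC : Cᵀ = C) (z : n → ℝ) :
    z ᵥ* C = C *ᵥ z := by
  conv_lhs => rw [← hC]
  rw [vecMul_transpose]

lemma dot_CC (C : Matrix n n ℝ) (hC : Cᵀ = C) (x : n → ℝ) :
    x ⬝ᵥ ((C * C) *ᵥ x) = (C *ᵥ x) ⬝ᵥ (C *ᵥ x) := by
  rw [← mulVec_mulVec]
  exact dot_symm C hC x (C *ᵥ x)

variable {l q : ℕ}

lemma blk_mulVec (B : Fin l → Matrix (Fin q) (Fin q) ℝ) (y : Fin l × Fin q → ℝ)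
    (p : Fin l × Fin q) :
    ((Matrix.of fun a b : Fin l × Fin q => if a.1 = b.1 then B a.1 a.2 b.2 else 0) *ᵥ y) p
      = ∑ t, B p.1 p.2 t * y (p.1, t) := by
  obtain ⟨i, s⟩ := p
  simp only [mulVec, dotProduct, Matrix.of_apply, Fintype.sum_prod_type, ite_mul, zero_mul]
  rw [Finset.sum_comm]
  simp [Finset.sum_ite_eq]

lemma blk_quad (B : Fin l → Matrix (Fin q) (Fin q) ℝ) (x y : Fin l × Fin q → ℝ) :
    x ⬝ᵥ ((Matrix.of fun a b : Fin l × Fin q => if a.1 = b.1 then B a.1 a.2 b.2 else 0) *ᵥ y)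
      = ∑ i, (fun s => x (i, s)) ⬝ᵥ (B i *ᵥ fun s => y (i, s)) := by
  rw [show ((Matrix.of fun a b : Fin l × Fin q =>
      if a.1 = b.1 then B a.1 a.2 b.2 else 0) *ᵥ y)
      = fun p => ∑ t, B p.1 p.2 t * y (p.1, t) from funext (blk_mulVec B y)]
  simp only [dotProduct, mulVec, Fintype.sum_prod_type]

lemma kron_mulVec (C : Matrix (Fin l) (Fin l) ℝ) (y : Fin l × Fin q → ℝ) (p : Fin l × Fin q) :
    ((C ⊗ₖ (1 : Matrix (Fin q) (Fin q) ℝ)) *ᵥ y) p = ∑ j, C p.1 j * y (j, p.2) := by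
  obtain ⟨i, s⟩ := p
  simp only [mulVec, dotProduct, kroneckerMap_apply, Fintype.sum_prod_type, Matrix.one_apply,
    mul_ite, mul_one, mul_zero, ite_mul, zero_mul]
  refine Finset.sum_congr rfl fun j _ => ?_
  simp [Finset.sum_ite_eq]

lemma kron_quad (C : Matrix (Fin l) (Fin l) ℝ) (x y : Fin l × Fin q → ℝ) :
    x ⬝ᵥ ((C ⊗ₖ (1 : Matrix (Fin q) (Fin q) ℝ)) *ᵥ y)
      = ∑ s, (fun i => x (i, s)) ⬝ᵥ (C *ᵥ fun i => y (i, s)) := by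
  rw [show ((C ⊗ₖ (1 : Matrix (Fin q) (Fin q) ℝ)) *ᵥ y)
      = fun p => ∑ j, C p.1 j * y (j, p.2) from funext (kron_mulVec C y)]
  simp only [dotProduct, mulVec, Fintype.sum_prod_type]
  rw [Finset.sum_comm]

lemma kron_mulVec_blockconst (C : Matrix (Fin l) (Fin l) ℝ) (v : Fin q → ℝ)
    (hC : C *ᵥ (fun _ => (1:ℝ)) = 0) :
    (C ⊗ₖ (1 : Matrix (Fin q) (Fin q) ℝ)) *ᵥ (fun p : Fin l × Fin q => v p.2) = 0 := by
  funext p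
  rw [kron_mulVec]
  have hrow : ∑ j, C p.1 j = 0 := by
    have := congrFun hC p.1
    simpa [mulVec, dotProduct] using this
  simp only [Pi.zero_apply, ← Finset.sum_mul]
  rw [hrow, zero_mul]

lemma one_kron_blk (P : Matrix (Fin q) (Fin q) ℝ) :
    (1 : Matrix (Fin l) (Fin l) ℝ) ⊗ₖ P
      = Matrix.of fun a b : Fin l × Fin q => if a.1 = b.1 then P a.2 b.2 else 0 := by
  ext ⟨i, s⟩ ⟨j, t⟩
  simp [kroneckerMap_apply, Matrix.one_apply, ite_mul]


end Stmt13Aux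

set_option maxHeartbeats 2000000 in
open Stmt13Aux in
/-- Stability of the coupled error dynamics: with `S = 𝓛 + 𝓛ᵀ`
positive semidefinite with kernel spanned by the all-ones vector and smallest nonzero
eigenvalue `λ₂ > 0`, `P̄` symmetric positive definite with `N̄ᵀP̄ + P̄N̄` negative
definite, `∑ N_i = l·N̄`, `N = blkdiag(N₁,…,N_l)`, `M = I_l ⊗ P̄⁻¹`, and `Λ₁, Λ₂ < 0, Λ₃`
the largest eigenvalues of `NᵀM⁻¹ + M⁻¹N`, `N̄ᵀP̄ + P̄N̄`, `(NᵀM⁻¹ + M⁻¹N)²`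
respectively, every `γ > (Λ₁ − Λ₃/Λ₂)/λ₂` makes `N − γM(𝓛 ⊗ I_q)` Hurwitz. -/
theorem stmt_13 (l q : ℕ) (hl : 2 ≤ l) (hq : 1 ≤ q)
    (𝓛 : Matrix (Fin l) (Fin l) ℝ)
    (hS : (𝓛 + 𝓛ᵀ).PosSemidef)
    (hker : ∀ x : Fin l → ℝ, (𝓛 + 𝓛ᵀ).mulVec x = 0 ↔ ∃ c : ℝ, x = fun _ => c)
    (lam₂ : ℝ) (hlam₂pos : 0 < lam₂)
    (hlam₂mem : lam₂ ∈ spectrum ℝ (𝓛 + 𝓛ᵀ))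
    (hlam₂min : ∀ μ ∈ spectrum ℝ (𝓛 + 𝓛ᵀ), μ ≠ 0 → lam₂ ≤ μ)
    (Nbar Pbar : Matrix (Fin q) (Fin q) ℝ)
    (hPbar : Pbar.PosDef) (hPbarSymm : Pbar.IsSymm)
    (hLyap : (-(Nbarᵀ * Pbar + Pbar * Nbar)).PosDef)
    (Ns : Fin l → Matrix (Fin q) (Fin q) ℝ)
    (hsum : ∑ i, Ns i = (l : ℝ) • Nbar)
    (N M : Matrix (Fin l × Fin q) (Fin l × Fin q) ℝ)
    (hN : N = Matrix.of fun a b => if a.1 = b.1 then Ns a.1 a.2 b.2 else 0)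
    (hM : M = (1 : Matrix (Fin l) (Fin l) ℝ) ⊗ₖ Pbar⁻¹)
    (Λ₁ Λ₂ Λ₃ : ℝ)
    (hΛ₁mem : Λ₁ ∈ spectrum ℝ (Nᵀ * M⁻¹ + M⁻¹ * N))
    (hΛ₁max : ∀ μ ∈ spectrum ℝ (Nᵀ * M⁻¹ + M⁻¹ * N), μ ≤ Λ₁)
    (hΛ₂neg : Λ₂ < 0)
    (hΛ₂mem : Λ₂ ∈ spectrum ℝ (Nbarᵀ * Pbar + Pbar * Nbar))
    (hΛ₂max : ∀ μ ∈ spectrum ℝ (Nbarᵀ * Pbar + Pbar * Nbar), μ ≤ Λ₂)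
    (hΛ₃mem : Λ₃ ∈ spectrum ℝ ((Nᵀ * M⁻¹ + M⁻¹ * N) ^ 2))
    (hΛ₃max : ∀ μ ∈ spectrum ℝ ((Nᵀ * M⁻¹ + M⁻¹ * N) ^ 2), μ ≤ Λ₃) :
    ∀ γ : ℝ, (Λ₁ - Λ₃ / Λ₂) / lam₂ < γ →
      ∀ μ ∈ spectrum ℂ
        ((N - γ • (M * (𝓛 ⊗ₖ (1 : Matrix (Fin q) (Fin q) ℝ)))).map Complex.ofReal),
        μ.re < 0 := by
  intro γ hγ
  classical
  have hl0 : (0:ℝ) < l := by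
    have : (2:ℝ) ≤ l := by exact_mod_cast hl
    linarith
  haveI hnel : Nonempty (Fin l) := ⟨⟨0, by omega⟩⟩
  haveI hneq : Nonempty (Fin q) := ⟨⟨0, by omega⟩⟩
  haveI : Nonempty (Fin l × Fin q) := ⟨(Classical.arbitrary _, Classical.arbitrary _)⟩
  set S := 𝓛 + 𝓛ᵀ with hSdef
  set P : Matrix (Fin l × Fin q) (Fin l × Fin q) ℝ :=
    (1 : Matrix (Fin l) (Fin l) ℝ) ⊗ₖ Pbar with hPdef
  have hPbarT : Pbarᵀ = Pbar := hPbarSymm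
  have hPdet : IsUnit Pbar.det := isUnit_iff_ne_zero.mpr (ne_of_gt hPbar.det_pos)
  have hMinv : M⁻¹ = P := by
    rw [hM, hPdef]
    apply Matrix.inv_eq_left_inv
    rw [← Matrix.mul_kronecker_mul, one_mul, Matrix.mul_nonsing_inv _ hPdet,
      Matrix.one_kronecker_one]
  set Q := Nᵀ * M⁻¹ + M⁻¹ * N with hQdef
  have hQP : Q = Nᵀ * P + P * N := by rw [hQdef, hMinv]
  set avg := Nbarᵀ * Pbar + Pbar * Nbar with havgdef
  -- transposes
  have hPT : Pᵀ = P := by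
    rw [hPdef, ← kroneckerMap_transpose, transpose_one, hPbarT]
  have hMT : Mᵀ = M := by
    rw [hM, ← kroneckerMap_transpose, transpose_one, transpose_nonsing_inv, hPbarT]
  have hQT : Qᵀ = Q := by
    have h1 : Qᵀ = P * N + Nᵀ * P := by
      rw [hQP, transpose_add, transpose_mul, transpose_mul, transpose_transpose, hPT]
    rw [h1, hQP, add_comm]
  have hQH : Q.IsHermitian := isHermitian_of_symm Q hQT
  have hQsqT : (Q^2)ᵀ = Q^2 := by rw [pow_two, transpose_mul, hQT]
  have hQsqH : (Q^2).IsHermitian := isHermitian_of_symm _ hQsqT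
  have hST : Sᵀ = S := by rw [hSdef, transpose_add, transpose_transpose, add_comm]
  have hSH : S.IsHermitian := hS.1
  have havgT : avgᵀ = avg := by
    have h1 : avgᵀ = Pbar * Nbar + Nbarᵀ * Pbar := by
      rw [havgdef, transpose_add, transpose_mul, transpose_mul, transpose_transpose, hPbarT]
    rw [h1, havgdef, add_comm]
  have havgH : avg.IsHermitian := isHermitian_of_symm _ havgT
  -- block structure of Q
  set Bm : Fin l → Matrix (Fin q) (Fin q) ℝ :=
    fun i => (Ns i)ᵀ * Pbar + Pbar * (Ns i) with hBm
  have hQblk : Q = Matrix.of fun a b : Fin l × Fin q =>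
      if a.1 = b.1 then Bm a.1 a.2 b.2 else 0 := by
    rw [hQP, hN, hPdef, one_kron_blk]
    ext ⟨i, s⟩ ⟨j, t⟩
    simp only [Matrix.add_apply, Matrix.mul_apply, Matrix.of_apply, Matrix.transpose_apply,
      Fintype.sum_prod_type, hBm]
    by_cases hij : i = j
    · subst hij
      simp [ite_mul, mul_ite, Finset.sum_ite_eq, Finset.sum_ite_eq', Matrix.mul_apply,
        Matrix.add_apply, Matrix.transpose_apply]
    · simp only [hij, if_false, ite_mul, mul_ite, mul_zero, zero_mul]
      simp [Finset.sum_ite_eq, Finset.sum_ite_eq', hij, Ne.symm hij]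
  have hsumB : ∑ i, Bm i = (l:ℝ) • avg := by
    calc ∑ i, Bm i
        = (∑ i, (Ns i)ᵀ) * Pbar + Pbar * (∑ i, Ns i) := by
          rw [hBm, Finset.sum_add_distrib, Finset.sum_mul, Finset.mul_sum]
      _ = ((l:ℝ) • Nbar)ᵀ * Pbar + Pbar * ((l:ℝ) • Nbar) := by
          rw [← Matrix.transpose_sum, hsum]
      _ = (l:ℝ) • avg := by
          rw [havgdef, Matrix.transpose_smul, Matrix.smul_mul, Matrix.mul_smul, smul_add]
  have hdotsum : ∀ (B : Fin l → Matrix (Fin q) (Fin q) ℝ) (v w : Fin q → ℝ),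
      v ⬝ᵥ ((∑ i, B i) *ᵥ w) = ∑ i, v ⬝ᵥ (B i *ᵥ w) := by
    intro B v w
    have h1 : (∑ i, B i) *ᵥ w = ∑ i, (B i *ᵥ w) := by
      funext s
      simp only [mulVec, dotProduct, Matrix.sum_apply, Finset.sum_mul, Finset.sum_apply]
      rw [Finset.sum_comm]
    rw [h1]
    simp only [dotProduct, Finset.sum_apply, Finset.mul_sum]
    rw [Finset.sum_comm]
  have hBIform : ∀ v : Fin q → ℝ,
      (fun p : Fin l × Fin q => v p.2) ⬝ᵥ (Q *ᵥ fun p : Fin l × Fin q => v p.2)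
        = (l:ℝ) * (v ⬝ᵥ (avg *ᵥ v)) := by
    intro v
    rw [hQblk, blk_quad]
    have h1 : ∑ i : Fin l, v ⬝ᵥ (Bm i *ᵥ v) = v ⬝ᵥ (((l:ℝ) • avg) *ᵥ v) := by
      rw [← hsumB, hdotsum]
    have h2 : v ⬝ᵥ (((l:ℝ) • avg) *ᵥ v) = (l:ℝ) * (v ⬝ᵥ (avg *ᵥ v)) := by
      rw [smul_mulVec, dotProduct_smul, smul_eq_mul]
    rw [← h2, ← h1]
  have hconstdot : ∀ v : Fin q → ℝ,
      (fun p : Fin l × Fin q => v p.2) ⬝ᵥ (fun p : Fin l × Fin q => v p.2)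
        = (l:ℝ) * (v ⬝ᵥ v) := by
    intro v
    simp only [dotProduct, Fintype.sum_prod_type]
    rw [Finset.sum_const, Finset.card_univ, Fintype.card_fin, nsmul_eq_mul]
  -- Rayleigh bounds
  have havgRay : ∀ v : Fin q → ℝ, v ⬝ᵥ (avg *ᵥ v) ≤ Λ₂ * (v ⬝ᵥ v) :=
    rayleigh_upper havgH hΛ₂max
  have hQRay : ∀ x, x ⬝ᵥ (Q *ᵥ x) ≤ Λ₁ * (x ⬝ᵥ x) := rayleigh_upper hQH hΛ₁max
  have hQsqRay : ∀ x, x ⬝ᵥ (Q^2 *ᵥ x) ≤ Λ₃ * (x ⬝ᵥ x) := rayleigh_upper hQsqH hΛ₃max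
  have hQsqPSD : (Q^2).PosSemidef := by
    refine PosSemidef.of_dotProduct_mulVec_nonneg hQsqH fun x => ?_
    rw [star_id, pow_two, dot_CC Q hQT]
    exact dot_self_nonneg _
  have hΛ₃nn : 0 ≤ Λ₃ := spectrum_psd_nonneg hQsqPSD hΛ₃mem
  -- minimum eigenvalue of Q and γ > 0
  obtain ⟨lm, hlmmem, hlmlow⟩ := exists_min_eig hQH
  have hlmΛ₁ : lm ≤ Λ₁ := hΛ₁max _ hlmmem
  have hΛ₃lm : lm^2 ≤ Λ₃ := by
    obtain ⟨w, hw0, hw⟩ := (mem_spectrum_iff_exists' _ lm).mp hlmmem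
    have hQQw : w ⬝ᵥ (Q^2 *ᵥ w) = lm^2 * (w ⬝ᵥ w) := by
      rw [pow_two, ← mulVec_mulVec, hw, mulVec_smul, hw, smul_smul, dotProduct_smul,
        smul_eq_mul]
      ring
    have hww : 0 < w ⬝ᵥ w :=
      lt_of_le_of_ne (dot_self_nonneg w)
        (Ne.symm fun h => hw0 (dotProduct_self_eq_zero.mp h))
    nlinarith [hQsqRay w]
  have hlmΛ₂ : lm ≤ Λ₂ := by
    obtain ⟨mx, hmxmem, hmxup⟩ := exists_max_eig havgH
    have hmxΛ₂ : mx ≤ Λ₂ := hΛ₂max _ hmxmem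
    set v0 : Fin q → ℝ := Pi.single (Classical.arbitrary (Fin q)) 1 with hv0def
    have hv0ne : v0 ≠ 0 := by
      intro h
      have := congrFun h (Classical.arbitrary (Fin q))
      simp [hv0def] at this
    have hv0pos : 0 < v0 ⬝ᵥ v0 :=
      lt_of_le_of_ne (dot_self_nonneg v0)
        (Ne.symm fun h => hv0ne (dotProduct_self_eq_zero.mp h))
    have h1 := hlmlow (fun p : Fin l × Fin q => v0 p.2)
    rw [hBIform v0, hconstdot v0] at h1
    have h2 := hmxup v0
    nlinarith [mul_le_mul_of_nonneg_left h2 hl0.le,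
      mul_le_mul_of_nonneg_right hmxΛ₂ (mul_pos hl0 hv0pos).le, mul_pos hl0 hv0pos]
  have hγpos : 0 < γ := by
    rcases le_or_gt Λ₁ 0 with hΛ₁le | hΛ₁pos
    · have hlm0 : lm ≤ 0 := le_trans hlmΛ₁ hΛ₁le
      have h2 : 0 ≤ Λ₁ - Λ₃ / Λ₂ := by
        have h3 : Λ₃ / Λ₂ ≤ lm := by
          rw [div_le_iff_of_neg hΛ₂neg]
          nlinarith
        linarith
      have := div_nonneg h2 hlam₂pos.le
      linarith
    · have h2 : 0 < Λ₁ - Λ₃ / Λ₂ := by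
        have := div_nonpos_of_nonneg_of_nonpos hΛ₃nn hΛ₂neg.le
        linarith
      have := div_pos h2 hlam₂pos
      linarith
  have hgl : Λ₁ * (-Λ₂) + Λ₃ < γ * lam₂ * (-Λ₂) := by
    have h5 : Λ₁ - Λ₃ / Λ₂ < γ * lam₂ := (div_lt_iff₀ hlam₂pos).mp hγ
    have h7 : Λ₃ / Λ₂ * Λ₂ = Λ₃ := div_mul_cancel₀ _ (ne_of_lt hΛ₂neg)
    nlinarith [mul_lt_mul_of_pos_right h5 (by linarith : (0:ℝ) < -Λ₂)]
  -- Lyapunov identity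
  set A := N - γ • (M * (𝓛 ⊗ₖ (1 : Matrix (Fin q) (Fin q) ℝ))) with hAdef
  set L1 := 𝓛 ⊗ₖ (1 : Matrix (Fin q) (Fin q) ℝ) with hL1def
  set K := S ⊗ₖ (1 : Matrix (Fin q) (Fin q) ℝ) with hKdef
  have hKT : Kᵀ = K := by
    rw [hKdef, ← kroneckerMap_transpose, transpose_one, hST]
  have hMP : M * P = 1 := by
    rw [hM, hPdef, ← Matrix.mul_kronecker_mul, one_mul, Matrix.nonsing_inv_mul _ hPdet,
      Matrix.one_kronecker_one]
  have hPM : P * M = 1 := by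
    rw [hM, hPdef, ← Matrix.mul_kronecker_mul, one_mul, Matrix.mul_nonsing_inv _ hPdet,
      Matrix.one_kronecker_one]
  have hL1T : L1ᵀ = 𝓛ᵀ ⊗ₖ (1 : Matrix (Fin q) (Fin q) ℝ) := by
    rw [hL1def, ← kroneckerMap_transpose, transpose_one]
  have hlyapId : Aᵀ * P + P * A = Q - γ • K := by
    have e1 : Aᵀ * P = Nᵀ * P - γ • L1ᵀ := by
      rw [hAdef, transpose_sub, transpose_smul, transpose_mul, sub_mul, smul_mul_assoc,
        mul_assoc, hMT, hMP, mul_one]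
    have e2 : P * A = P * N - γ • L1 := by
      rw [hAdef, mul_sub, Matrix.mul_smul, ← mul_assoc, hPM, one_mul]
    rw [e1, e2, hQP, hKdef, hSdef, add_kronecker, hL1T, ← hL1def, smul_add]
    abel
  -- positive definiteness of P
  have hPposd : P.PosDef := by
    have hPq : ∀ x' : Fin l × Fin q → ℝ, x' ⬝ᵥ (P *ᵥ x')
        = ∑ i, (fun s => x' (i, s)) ⬝ᵥ (Pbar *ᵥ fun s => x' (i, s)) := by
      intro x'
      rw [hPdef, one_kron_blk]
      exact blk_quad (fun _ => Pbar) x' x'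
    refine PosDef.of_dotProduct_mulVec_pos (isHermitian_of_symm P hPT) fun x hx => ?_
    rw [star_id, hPq x]
    have hex : ∃ i, (fun s => x (i, s)) ≠ 0 := by
      by_contra h
      push_neg at h
      apply hx
      funext p
      exact congrFun (h p.1) p.2
    obtain ⟨i0, hi0⟩ := hex
    refine Finset.sum_pos' (fun i _ => ?_) ⟨i0, Finset.mem_univ _, ?_⟩
    · have := hPbar.posSemidef.dotProduct_mulVec_nonneg (fun s => x (i, s))
      rwa [star_id] at this
    · have := hPbar.dotProduct_mulVec_pos hi0
      rwa [star_id] at this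
  -- kernel bound for S
  have hS1 : S *ᵥ (fun _ => (1:ℝ)) = 0 := (hker _).mpr ⟨1, rfl⟩
  have hcolb : ∀ w : Fin l → ℝ, (∑ i, w i) = 0 → lam₂ * (w ⬝ᵥ w) ≤ w ⬝ᵥ (S *ᵥ w) := by
    intro w hwsum
    obtain ⟨d, u, hspec, heig, hform, hnorm⟩ := quad_decomp hSH
    rw [hform w, hnorm w, Finset.mul_sum]
    refine Finset.sum_le_sum fun i _ => ?_
    by_cases hdi : d i = 0
    · have hu : S *ᵥ u i = 0 := by rw [heig i, hdi, zero_smul]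
      obtain ⟨c, hc⟩ := (hker (u i)).mp hu
      have hdot : u i ⬝ᵥ w = 0 := by
        rw [hc]
        simp only [dotProduct]
        rw [← Finset.mul_sum, hwsum, mul_zero]
      rw [hdot, hdi]
      simp
    · exact mul_le_mul_of_nonneg_right (hlam₂min _ (hspec i) hdi) (sq_nonneg _)
  -- the main estimate
  have hlyapPD : (-(Q - γ • K)).PosDef := by
    refine PosDef.of_dotProduct_mulVec_pos (isHermitian_of_symm _ (by rw [transpose_neg, transpose_sub, transpose_smul,
      hQT, hKT])) fun x hx => ?_
    rw [star_id, neg_mulVec, dotProduct_neg, sub_mulVec, dotProduct_sub,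
      smul_mulVec, dotProduct_smul, smul_eq_mul]
    have hmain : x ⬝ᵥ (Q *ᵥ x) - γ * (x ⬝ᵥ (K *ᵥ x)) < 0 := by
      set v : Fin q → ℝ := fun s => (∑ i, x (i, s)) / l with hvdef
      set z : Fin l × Fin q → ℝ := fun p => v p.2 with hzdef
      set y : Fin l × Fin q → ℝ := x - z with hydef
      have hxzy : x = z + y := by
        funext p
        simp [hydef]
      have hysum : ∀ s, ∑ i, y (i, s) = 0 := by
        intro s
        have hlne : (l:ℝ) ≠ 0 := ne_of_gt hl0
        simp only [hydef, hzdef, hvdef, Pi.sub_apply, Finset.sum_sub_distrib,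
          Finset.sum_const, Finset.card_univ, Fintype.card_fin, nsmul_eq_mul]
        field_simp
        ring
      have hKz : K *ᵥ z = 0 := kron_mulVec_blockconst S v hS1
      have eK : x ⬝ᵥ (K *ᵥ x) = y ⬝ᵥ (K *ᵥ y) := by
        rw [hxzy, mulVec_add, hKz, zero_add, add_dotProduct, dot_symm K hKT z y, hKz,
          dotProduct_zero, zero_add]
      have eQ : x ⬝ᵥ (Q *ᵥ x) = z ⬝ᵥ (Q *ᵥ z) + 2 * (z ⬝ᵥ (Q *ᵥ y)) + y ⬝ᵥ (Q *ᵥ y) := by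
        rw [hxzy, mulVec_add, dotProduct_add, add_dotProduct, add_dotProduct,
          dot_symm Q hQT y z]
        ring
      have hzQz : z ⬝ᵥ (Q *ᵥ z) = (l:ℝ) * (v ⬝ᵥ (avg *ᵥ v)) := hBIform v
      have hzz : z ⬝ᵥ z = (l:ℝ) * (v ⬝ᵥ v) := hconstdot v
      have ha2 : 0 ≤ v ⬝ᵥ v := dot_self_nonneg v
      have hb2 : 0 ≤ y ⬝ᵥ y := dot_self_nonneg y
      have hyKy : lam₂ * (y ⬝ᵥ y) ≤ y ⬝ᵥ (K *ᵥ y) := by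
        rw [hKdef, kron_quad]
        have hyy : y ⬝ᵥ y = ∑ s, (fun i => y (i, s)) ⬝ᵥ (fun i => y (i, s)) := by
          simp only [dotProduct, Fintype.sum_prod_type]
          rw [Finset.sum_comm]
        rw [hyy, Finset.mul_sum]
        exact Finset.sum_le_sum fun s _ => hcolb _ (hysum s)
      have hcr2 : (z ⬝ᵥ (Q *ᵥ y))^2 ≤ Λ₃ * ((l:ℝ) * (v ⬝ᵥ v)) * (y ⬝ᵥ y) := by
        have h1 : z ⬝ᵥ (Q *ᵥ y) = (Q *ᵥ z) ⬝ᵥ y := by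
          rw [dotProduct_mulVec, vecMul_eq_mulVec Q hQT]
        have h2 : ((Q *ᵥ z) ⬝ᵥ y)^2 ≤ ((Q *ᵥ z) ⬝ᵥ (Q *ᵥ z)) * (y ⬝ᵥ y) := by
          have := Finset.sum_mul_sq_le_sq_mul_sq Finset.univ (Q *ᵥ z) y
          simpa [dotProduct, sq] using this
        have h3 : (Q *ᵥ z) ⬝ᵥ (Q *ᵥ z) = z ⬝ᵥ (Q^2 *ᵥ z) := by
          rw [pow_two, dot_CC Q hQT]
        have h4 : z ⬝ᵥ (Q^2 *ᵥ z) ≤ Λ₃ * (z ⬝ᵥ z) := hQsqRay z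
        rw [h1, ← hzz]
        nlinarith [dot_self_nonneg y]
      have hpos : 0 < v ⬝ᵥ v ∨ 0 < y ⬝ᵥ y := by
        by_contra h
        push_neg at h
        have hv0 : v = 0 := dotProduct_self_eq_zero.mp (le_antisymm h.1 ha2)
        have hy0 : y = 0 := dotProduct_self_eq_zero.mp (le_antisymm h.2 hb2)
        apply hx
        rw [hxzy, hy0, add_zero]
        funext p
        simp [hzdef, hv0]
      by_cases hb0 : y ⬝ᵥ y = 0
      · have hy0 : y = 0 := dotProduct_self_eq_zero.mp hb0
        have ha2pos : 0 < v ⬝ᵥ v := by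
          rcases hpos with h | h
          · exact h
          · exact absurd hb0 (ne_of_gt h)
        have hzneg : z ⬝ᵥ (Q *ᵥ z) < 0 := by
          have u1 : (l:ℝ) * (v ⬝ᵥ (avg *ᵥ v)) ≤ (l:ℝ) * (Λ₂ * (v ⬝ᵥ v)) :=
            mul_le_mul_of_nonneg_left (havgRay v) hl0.le
          have u2 : (l:ℝ) * (Λ₂ * (v ⬝ᵥ v)) < 0 :=
            mul_neg_of_pos_of_neg hl0 (mul_neg_of_neg_of_pos hΛ₂neg ha2pos)
          rw [hzQz]
          linarith
        rw [eQ, eK, hy0]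
        simp only [mulVec_zero, dotProduct_zero, zero_dotProduct, mul_zero, add_zero]
        linarith
      · have hb2pos : 0 < y ⬝ᵥ y := lt_of_le_of_ne hb2 (Ne.symm hb0)
        have hd : (0:ℝ) < -Λ₂ := by linarith
        have hXnn : 0 ≤ (l:ℝ) * (-Λ₂)^2 * (v ⬝ᵥ v) :=
          mul_nonneg (mul_nonneg hl0.le (sq_nonneg (-Λ₂))) ha2
        have hYnn : 0 ≤ Λ₃ * (y ⬝ᵥ y) := mul_nonneg hΛ₃nn hb2
        have hXY : ((-Λ₂) * (z ⬝ᵥ (Q *ᵥ y)))^2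
            ≤ ((l:ℝ) * (-Λ₂)^2 * (v ⬝ᵥ v)) * (Λ₃ * (y ⬝ᵥ y)) := by
          nlinarith [mul_le_mul_of_nonneg_left hcr2 (sq_nonneg (-Λ₂))]
        have hcr : 2 * ((-Λ₂) * (z ⬝ᵥ (Q *ᵥ y)))
            ≤ (l:ℝ) * (-Λ₂)^2 * (v ⬝ᵥ v) + Λ₃ * (y ⬝ᵥ y) := by
          nlinarith [hXY, hXnn, hYnn,
            sq_nonneg ((l:ℝ) * (-Λ₂)^2 * (v ⬝ᵥ v) - Λ₃ * (y ⬝ᵥ y))]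
        have u1 : (l:ℝ) * (v ⬝ᵥ (avg *ᵥ v)) ≤ (l:ℝ) * (Λ₂ * (v ⬝ᵥ v)) :=
          mul_le_mul_of_nonneg_left (havgRay v) hl0.le
        have hstep : γ * (lam₂ * (y ⬝ᵥ y)) ≤ γ * (y ⬝ᵥ (K *ᵥ y)) :=
          mul_le_mul_of_nonneg_left hyKy hγpos.le
        have t1 : x ⬝ᵥ (Q *ᵥ x) - γ * (x ⬝ᵥ (K *ᵥ x))
            ≤ (l:ℝ) * Λ₂ * (v ⬝ᵥ v) + 2 * (z ⬝ᵥ (Q *ᵥ y)) + Λ₁ * (y ⬝ᵥ y)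
              - γ * lam₂ * (y ⬝ᵥ y) := by
          rw [eQ, eK, hzQz]
          have := hQRay y
          nlinarith [u1, hstep]
        have t2 : ((l:ℝ) * Λ₂ * (v ⬝ᵥ v) + 2 * (z ⬝ᵥ (Q *ᵥ y)) + Λ₁ * (y ⬝ᵥ y)
            - γ * lam₂ * (y ⬝ᵥ y)) * (-Λ₂) < 0 := by
          nlinarith [hcr, mul_lt_mul_of_pos_right hgl hb2pos]
        nlinarith [t1, t2, hd]
    linarith
  exact hurwitz_of_lyapunov A P hPposd (by rw [hlyapId]; exact hlyapPD)
end

section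
/- Let A ∈ ℝ^{n×n}, C ∈ ℝ^{p×n}, K ∈ ℝ^{r×n}, and suppose T ∈ ℝ^{q×n}, L ∈ ℝ^{q×p}, N ∈ ℝ^{q×q}, R ∈ ℝ^{r×q} satisfy NT + LC = TA, R = KTᵀ, KTᵀT = K, and every complex eigenvalue of N has negative real part. Let B ∈ ℝ^{n×m}, D ∈ ℝ^{p×m} and set H := TB − LD. Then for every continuous u : ℝ → ℝ^m and all differentiable x : ℝ → ℝⁿ, w : ℝ → ℝ^q satisfying x'(t) = Ax(t) + Bu(t) and w'(t) = Nw(t) + Hu(t) + L(Cx(t) + Du(t)) for all t ≥ 0, the error e₁(t) := w(t) − Tx(t) satisfies e₁'(t) = N e₁(t) for all t ≥ 0, and consequently Rw(t) − Kx(t) = R e₁(t) → 0 as t → ∞. -/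
open Matrix

open Matrix NormedSpace Filter Topology Nat

attribute [local instance] Matrix.linftyOpNormedRing Matrix.linftyOpNormedAlgebra

namespace Stmt15Aux

variable {q : ℕ}

/-- `M ↦ M.mulVec v` as a continuous linear map. -/
noncomputable def mvCLM (v : Fin q → ℂ) :
    Matrix (Fin q) (Fin q) ℂ →L[ℂ] (Fin q → ℂ) :=
  LinearMap.toContinuousLinearMap
    { toFun := fun M => M.mulVec v
      map_add' := fun _ _ => Matrix.add_mulVec _ _ _
      map_smul' := fun c M => Matrix.smul_mulVec c M v }

@[simp] lemma mvCLM_apply (v : Fin q → ℂ) (M : Matrix (Fin q) (Fin q) ℂ) :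
    mvCLM v M = M.mulVec v := rfl

lemma decay_gen (Nc : Matrix (Fin q) (Fin q) ℂ) {μ : ℂ} (hμ : μ.re < 0) (k : ℕ)
    (v : Fin q → ℂ) (hv : ((Nc - μ • 1) ^ k).mulVec v = 0) :
    Tendsto (fun t : ℝ => (exp (t • Nc)).mulVec v) atTop (𝓝 0) := by
  set M : Matrix (Fin q) (Fin q) ℂ := Nc - μ • 1 with hM
  have key : ∀ t : ℝ, (exp (t • Nc)).mulVec v
      = ∑ j ∈ Finset.range k,
          (Complex.exp ((t : ℂ) * μ) * ((t : ℂ) ^ j * ((j ! : ℂ))⁻¹)) • (M ^ j).mulVec v := by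
    intro t
    have hz : (t : ℝ) • Nc = ((t : ℂ)) • Nc := (algebraMap_smul ℂ t Nc).symm
    have hsplit : ((t : ℂ)) • Nc = ((t : ℂ) * μ) • (1 : Matrix (Fin q) (Fin q) ℂ)
        + (t : ℂ) • M := by
      rw [hM, smul_sub, smul_smul]
      abel
    have hcomm : Commute (((t : ℂ) * μ) • (1 : Matrix (Fin q) (Fin q) ℂ)) ((t : ℂ) • M) :=
      (Commute.one_left _).smul_left _
    have hexp : exp ((t : ℝ) • Nc)
        = Complex.exp ((t : ℂ) * μ) • exp ((t : ℂ) • M) := by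
      rw [hz, hsplit, Matrix.exp_add_of_commute _ _ hcomm]
      have h1 : (((t : ℂ) * μ) • (1 : Matrix (Fin q) (Fin q) ℂ))
          = algebraMap ℂ (Matrix (Fin q) (Fin q) ℂ) ((t : ℂ) * μ) := by
        simp [Algebra.algebraMap_eq_smul_one]
      rw [h1]
      refine (congrArg (· * exp ((t : ℂ) • M))
        (algebraMap_exp_comm (𝔸 := Matrix (Fin q) (Fin q) ℂ) ((t : ℂ) * μ))).symm.trans ?_
      rw [Algebra.algebraMap_eq_smul_one, smul_mul_assoc, one_mul,
        Complex.exp_eq_exp_ℂ]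
    have hmap := (exp_series_hasSum_exp' (𝕂 := ℂ) ((t : ℂ) • M)).mapL (mvCLM v)
    have hterm : ∀ n : ℕ, mvCLM v ((n !⁻¹ : ℂ) • ((t : ℂ) • M) ^ n)
        = ((t : ℂ) ^ n * ((n ! : ℂ))⁻¹) • (M ^ n).mulVec v := by
      intro n
      rw [mvCLM_apply, smul_pow, smul_smul, Matrix.smul_mulVec]
      congr 1
      ring
    have hzero : ∀ n ∉ Finset.range k,
        mvCLM v ((n !⁻¹ : ℂ) • ((t : ℂ) • M) ^ n) = 0 := by
      intro n hn
      rw [Finset.mem_range, not_lt] at hn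
      have h0 : (M ^ n).mulVec v = 0 := by
        have h1 : M ^ n = M ^ (n - k) * M ^ k := by rw [← pow_add]; congr 1; omega
        rw [h1, ← Matrix.mulVec_mulVec, hv, Matrix.mulVec_zero]
      rw [hterm, h0, smul_zero]
    have hval : (exp ((t : ℂ) • M)).mulVec v
        = ∑ j ∈ Finset.range k, ((t : ℂ) ^ j * ((j ! : ℂ))⁻¹) • (M ^ j).mulVec v := by
      have h2 := (hasSum_sum_of_ne_finset_zero hzero).unique hmap
      rw [mvCLM_apply] at h2
      refine h2.symm.trans ?_
      exact Finset.sum_congr rfl fun j _ => hterm j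
    rw [hexp, Matrix.smul_mulVec, hval, Finset.smul_sum]
    exact Finset.sum_congr rfl fun j _ => by rw [smul_smul]
  have hterms : ∀ j : ℕ, Tendsto (fun t : ℝ =>
      (Complex.exp ((t : ℂ) * μ) * ((t : ℂ) ^ j * ((j ! : ℂ))⁻¹)) • (M ^ j).mulVec v)
      atTop (𝓝 0) := by
    intro j
    have hc : Tendsto (fun t : ℝ => Complex.exp ((t : ℂ) * μ) * ((t : ℂ) ^ j * ((j ! : ℂ))⁻¹))
      atTop (𝓝 0) := by
        rw [tendsto_zero_iff_norm_tendsto_zero]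
        have ha : (0 : ℝ) < -μ.re := by linarith
        have hbase : Tendsto (fun t : ℝ => ((-μ.re) * t) ^ j * Real.exp (-((-μ.re) * t)))
            atTop (𝓝 0) :=
          (Real.tendsto_pow_mul_exp_neg_atTop_nhds_zero j).comp
            (Tendsto.const_mul_atTop ha tendsto_id)
        have hbase' : Tendsto (fun t : ℝ => (((-μ.re))⁻¹ ^ j * ((j ! : ℝ))⁻¹) *
            (((-μ.re) * t) ^ j * Real.exp (-((-μ.re) * t)))) atTop (𝓝 0) := by
          simpa using hbase.const_mul (((-μ.re))⁻¹ ^ j * ((j ! : ℝ))⁻¹)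
        apply squeeze_zero_norm' ?_ hbase'
        filter_upwards [eventually_ge_atTop (0 : ℝ)] with t ht
        have hnorm : ‖Complex.exp ((t : ℂ) * μ) * ((t : ℂ) ^ j * ((j ! : ℂ))⁻¹)‖
            = Real.exp (t * μ.re) * (t ^ j * ((j !) : ℝ)⁻¹) := by
          rw [norm_mul, norm_mul, Complex.norm_exp]
          simp [abs_of_nonneg ht]
        rw [Real.norm_eq_abs, abs_of_nonneg (by positivity : (0:ℝ) ≤ _)]
        rw [hnorm, show -(-μ.re * t) = t * μ.re by ring]
        apply le_of_eq
        have hne : (-μ.re) ≠ 0 := ne_of_gt ha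
        have hfac : ((j ! : ℝ)) ≠ 0 := Nat.cast_ne_zero.2 (Nat.factorial_ne_zero j)
        have hpow : (-μ.re)⁻¹ ^ j * (-μ.re) ^ j = 1 := by
          rw [← mul_pow, inv_mul_cancel₀ hne, one_pow]
        linear_combination (-(Real.exp (t * μ.re) * t ^ j * ((j ! : ℝ))⁻¹)) * hpow
    simpa using hc.smul_const ((M ^ j).mulVec v)
  have hsum := tendsto_finset_sum (Finset.range k) (fun j _ => hterms j)
  rw [funext key]
  simpa using hsum

lemma decay_all (Nc : Matrix (Fin q) (Fin q) ℂ)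
    (hN : ∀ μ ∈ spectrum ℂ Nc, μ.re < 0) (v : Fin q → ℂ) :
    Tendsto (fun t : ℝ => (exp (t • Nc)).mulVec v) atTop (𝓝 0) := by
  set f : Module.End ℂ (Fin q → ℂ) := Matrix.toLinAlgEquiv' Nc with hf
  have htop := Module.End.iSup_maxGenEigenspace_eq_top f
  have hv : v ∈ ⨆ μ : ℂ, f.maxGenEigenspace μ := htop ▸ Submodule.mem_top
  refine Submodule.iSup_induction _ (motive := fun v => Tendsto
      (fun t : ℝ => (exp (t • Nc)).mulVec v) atTop (𝓝 0)) hv ?_ ?_ ?_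
  · intro μ w hw
    by_cases hw0 : w = 0
    · simpa [hw0] using tendsto_const_nhds
    · obtain ⟨k, hk⟩ := (Module.End.mem_maxGenEigenspace f μ w).mp hw
      have hspec : μ ∈ spectrum ℂ Nc := by
        have hgen : f.HasGenEigenvalue μ k := by
          rw [Module.End.hasGenEigenvalue_iff]
          intro hbot
          apply hw0
          have : w ∈ f.genEigenspace μ (k : ℕ∞) := by
            rw [Module.End.mem_genEigenspace_nat]
            exact hk
          rw [hbot] at this
          simpa using this
        have heig := Module.End.hasEigenvalue_of_hasGenEigenvalue hgen
        have := heig.mem_spectrum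
        rwa [AlgEquiv.spectrum_eq Matrix.toLinAlgEquiv' Nc] at this
      have hkmul : ((Nc - μ • 1) ^ k).mulVec w = 0 := by
        have : (f - μ • 1) ^ k = Matrix.toLinAlgEquiv' ((Nc - μ • 1) ^ k) := by
          rw [map_pow, map_sub, _root_.map_smul, _root_.map_one]
        rw [this] at hk
        rw [Matrix.toLinAlgEquiv'_apply] at hk
        exact hk
      exact decay_gen Nc (hN μ hspec) k w hkmul
  · simpa using tendsto_const_nhds
  · intro w₁ w₂ h₁ h₂
    have := h₁.add h₂
    simpa [Matrix.mulVec_add] using this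

/-- `M ↦ (v ↦ M.mulVec v)` as a real-linear CLM into CLMs. -/
noncomputable def phiCLM (q : ℕ) :
    Matrix (Fin q) (Fin q) ℂ →L[ℝ] ((Fin q → ℂ) →L[ℝ] (Fin q → ℂ)) :=
  LinearMap.toContinuousLinearMap
    { toFun := fun M => LinearMap.toContinuousLinearMap ((M.mulVecLin).restrictScalars ℝ)
      map_add' := by
        intro M₁ M₂
        ext v i
        simp [Matrix.add_mulVec]
      map_smul' := by
        intro c M
        ext v i
        simp [Matrix.smul_mulVec] }

@[simp] lemma phiCLM_apply (M : Matrix (Fin q) (Fin q) ℂ) (v : Fin q → ℂ) :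
    phiCLM q M v = M.mulVec v := rfl

lemma sol_formula (Nc : Matrix (Fin q) (Fin q) ℂ) (ec : ℝ → Fin q → ℂ)
    (hd : ∀ s : ℝ, 0 ≤ s → HasDerivAt ec (Nc.mulVec (ec s)) s)
    {t : ℝ} (ht : 0 ≤ t) : ec t = (exp (t • Nc)).mulVec (ec 0) := by
  set g : ℝ → Fin q → ℂ := fun s => (exp ((-s) • Nc)).mulVec (ec s) with hgdef
  have hg : ∀ s : ℝ, 0 ≤ s → HasDerivAt g 0 s := by
    intro s hs
    have h1 : HasDerivAt (fun s' : ℝ => exp (s' • Nc)) (exp ((-s) • Nc) * Nc) (-s) :=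
      hasDerivAt_exp_smul_const Nc (-s)
    have hneg : HasDerivAt (fun s' : ℝ => -s') (-1 : ℝ) s := (hasDerivAt_id s).neg
    have h2 : HasDerivAt (fun s' : ℝ => exp ((-s') • Nc))
        ((-1 : ℝ) • (exp ((-s) • Nc) * Nc)) s := h1.scomp s hneg
    have h3 : HasDerivAt (fun s' : ℝ => phiCLM q (exp ((-s') • Nc)))
        (phiCLM q ((-1 : ℝ) • (exp ((-s) • Nc) * Nc))) s :=
      (phiCLM q).hasFDerivAt.comp_hasDerivAt s h2
    have h4 := h3.clm_apply (hd s hs)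
    have h5 : phiCLM q ((-1 : ℝ) • (exp ((-s) • Nc) * Nc)) (ec s)
        + phiCLM q (exp ((-s) • Nc)) (Nc.mulVec (ec s)) = 0 := by
      rw [_root_.map_smul]
      simp only [ContinuousLinearMap.smul_apply, phiCLM_apply]
      rw [Matrix.mulVec_mulVec]
      simp
    rw [h5] at h4
    exact h4
  have hconst : g t = g 0 := by
    have hcont : ContinuousOn g (Set.Icc 0 t) :=
      fun s hs => ((hg s hs.1).continuousAt).continuousWithinAt
    have hder : ∀ s ∈ Set.Ico 0 t, HasDerivWithinAt g 0 (Set.Ici s) s :=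
      fun s hs => (hg s hs.1).hasDerivWithinAt
    exact constant_of_has_deriv_right_zero hcont hder t ⟨ht, le_refl t⟩
  have hg0 : g 0 = ec 0 := by
    simp [hgdef]
  have hgt : (exp ((-t) • Nc)).mulVec (ec t) = ec 0 := by
    rw [← hg0, ← hconst]
  have hinv : exp (t • Nc) * exp ((-t) • Nc) = 1 := by
    have hcomm : Commute ((t : ℝ) • Nc) ((-t : ℝ) • Nc) :=
      ((Commute.refl Nc).smul_left t).smul_right (-t)
    rw [← Matrix.exp_add_of_commute _ _ hcomm, ← add_smul]
    simp
  calc ec t = ((exp (t • Nc)) * exp ((-t) • Nc)).mulVec (ec t) := by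
        rw [hinv, Matrix.one_mulVec]
    _ = (exp (t • Nc)).mulVec ((exp ((-t) • Nc)).mulVec (ec t)) := by
        rw [Matrix.mulVec_mulVec]
    _ = (exp (t • Nc)).mulVec (ec 0) := by rw [hgt]

end Stmt15Aux

open Stmt15Aux NormedSpace Filter Topology Nat

/-- If `NT + LC = TA`, `R = KTᵀ`, `KTᵀT = K`, `N` is Hurwitz and
`H = TB − LD`, then along any solutions of the plant `x' = Ax + Bu` and the estimator
`w' = Nw + Hu + L(Cx + Du)`, the error `e₁ = w − Tx` satisfies `e₁' = N e₁` on
`[0, ∞)` and `Rw(t) − Kx(t) = R e₁(t) → 0` as `t → ∞`. -/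
theorem stmt_15 (n m p q r : ℕ)
    (A : Matrix (Fin n) (Fin n) ℝ) (C : Matrix (Fin p) (Fin n) ℝ)
    (K : Matrix (Fin r) (Fin n) ℝ)
    (T : Matrix (Fin q) (Fin n) ℝ) (L : Matrix (Fin q) (Fin p) ℝ)
    (N : Matrix (Fin q) (Fin q) ℝ) (R : Matrix (Fin r) (Fin q) ℝ)
    (hNT : N * T + L * C = T * A)
    (hR : R = K * Tᵀ)
    (hKT : K * Tᵀ * T = K)
    (hN : ∀ μ ∈ spectrum ℂ (N.map Complex.ofReal), μ.re < 0)
    (B : Matrix (Fin n) (Fin m) ℝ) (D : Matrix (Fin p) (Fin m) ℝ)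
    (H : Matrix (Fin q) (Fin m) ℝ) (hH : H = T * B - L * D) :
    ∀ u : ℝ → (Fin m → ℝ), Continuous u →
    ∀ x : ℝ → (Fin n → ℝ), Differentiable ℝ x →
    ∀ w : ℝ → (Fin q → ℝ), Differentiable ℝ w →
    (∀ t : ℝ, 0 ≤ t → deriv x t = A.mulVec (x t) + B.mulVec (u t)) →
    (∀ t : ℝ, 0 ≤ t →
      deriv w t = N.mulVec (w t) + H.mulVec (u t) +
        L.mulVec (C.mulVec (x t) + D.mulVec (u t))) →
    (∀ t : ℝ, 0 ≤ t →
      deriv (fun s => w s - T.mulVec (x s)) t = N.mulVec (w t - T.mulVec (x t))) ∧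
    Filter.Tendsto (fun t => R.mulVec (w t) - K.mulVec (x t)) Filter.atTop (nhds 0) := by
  intro u hu x hx w hw hxode hwode
  classical
  set e : ℝ → Fin q → ℝ := fun s => w s - T.mulVec (x s) with he
  have hTd : ∀ t : ℝ, HasDerivAt (fun s => T.mulVec (x s)) (T.mulVec (deriv x t)) t := by
    intro t
    have h := (LinearMap.toContinuousLinearMap
      (Matrix.mulVecLin T)).hasFDerivAt.comp_hasDerivAt t (hx t).hasDerivAt
    simpa [Function.comp_def] using h
  have heD : ∀ t : ℝ, 0 ≤ t → HasDerivAt e (N.mulVec (e t)) t := by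
    intro t ht
    have h := ((hw t).hasDerivAt).sub (hTd t)
    have hval : deriv w t - T.mulVec (deriv x t) = N.mulVec (e t) := by
      rw [hwode t ht, hxode t ht, hH, he]
      simp only [Matrix.mulVec_add, Matrix.mulVec_sub, Matrix.sub_mulVec, Matrix.add_mulVec,
        Matrix.mulVec_mulVec]
      rw [← hNT]
      simp only [Matrix.add_mulVec]
      abel
    rw [hval] at h
    exact h
  set Nc : Matrix (Fin q) (Fin q) ℂ := N.map Complex.ofReal with hNc
  set ρ : (Fin q → ℝ) →L[ℝ] (Fin q → ℂ) :=
    ContinuousLinearMap.pi (fun i => Complex.ofRealCLM.comp (ContinuousLinearMap.proj i))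
    with hρ
  set ec : ℝ → Fin q → ℂ := fun s => ρ (e s) with hec
  have hρ_apply : ∀ v : Fin q → ℝ, ∀ i, ρ v i = (v i : ℂ) := by
    intro v i
    simp [hρ]
  have hρmul : ∀ v : Fin q → ℝ, ρ (N.mulVec v) = Nc.mulVec (ρ v) := by
    intro v
    funext i
    rw [hρ_apply]
    simp only [Matrix.mulVec, dotProduct, hNc, Matrix.map_apply]
    push_cast
    rw [Finset.sum_congr rfl]
    intro j _
    rw [hρ_apply]
  have hecD : ∀ t : ℝ, 0 ≤ t → HasDerivAt ec (Nc.mulVec (ec t)) t := by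
    intro t ht
    have h := ρ.hasFDerivAt.comp_hasDerivAt t (heD t ht)
    rw [hρmul] at h
    exact h
  have hsol : ∀ t : ℝ, 0 ≤ t → ec t = (NormedSpace.exp (t • Nc)).mulVec (ec 0) :=
    fun t ht => sol_formula Nc ec hecD ht
  have hdecay := decay_all Nc hN (ec 0)
  have hecT : Filter.Tendsto ec Filter.atTop (nhds 0) := by
    apply hdecay.congr'
    filter_upwards [Filter.eventually_ge_atTop (0 : ℝ)] with t ht
    exact (hsol t ht).symm
  have heT : Filter.Tendsto e Filter.atTop (nhds 0) := by
    rw [tendsto_pi_nhds]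
    intro i
    have h1 : Filter.Tendsto (fun t => ec t i) Filter.atTop (nhds 0) :=
      tendsto_pi_nhds.mp hecT i
    have h2 := (Complex.continuous_re.tendsto 0).comp h1
    have h3 : ∀ t, (ec t i).re = e t i := by
      intro t
      show (ρ (e t) i).re = e t i
      rw [hρ_apply]
      simp
    simpa [Function.comp_def, h3] using h2
  refine ⟨fun t ht => (heD t ht).deriv, ?_⟩
  have hRT : R * T = K := by rw [hR]; exact hKT
  have hfeq : ∀ t, R.mulVec (w t) - K.mulVec (x t) = R.mulVec (e t) := by
    intro t
    rw [he]
    simp only [Matrix.mulVec_sub, Matrix.mulVec_mulVec, hRT]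
  rw [funext hfeq]
  have h := ((LinearMap.toContinuousLinearMap
    (Matrix.mulVecLin R)).continuous.tendsto 0).comp heT
  simpa [Function.comp_def] using h
end
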